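/- Let Q_{12}, Q_{21} ∈ W^n_1[0,1], a ∈ [0,1], and m ∈ {0,1,…,n−1}. (i) If q_−^{(j)}(a) = 0 for all 0 ≤ j < m and q_−^{(m)}(a) ≠ 0, then σ_j^+(a) = 0 for 1 ≤ j ≤ m and σ_{m+1}^+(a) ≠ 0. (ii) If q_+^{(j)}(a) = 0 for all 0 ≤ j < m and q_+^{(m)}(a) ≠ 0, then σ_j^-(a) = 0 for 1 ≤ j ≤ m and σ_{m+1}^-(a) ≠ 0. -/

import Mathlib

open MeasureTheory Set Filter

noncomputable section

/-- The unit interval `[0,1]` as a subset of `ℝ`. -/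
def I01 : Set ℝ := Set.Icc 0 1

/-- Lebesgue measure restricted to `[0,1]`. -/
def mu01 : MeasureTheory.Measure ℝ := MeasureTheory.volume.restrict I01

/-- `f ∈ W^n_1[0,1]`: the derivatives of `f` up to order `n-1` exist and are continuous on
`[0,1]`, and the `(n-1)`-st derivative is absolutely continuous, i.e. an indefinite integral
of an integrable function (its a.e.-derivative `f⁽ⁿ⁾ ∈ L¹[0,1]`). -/
def MemW1 (n : ℕ) (f : ℝ → ℂ) : Prop :=
  ContDiffOn ℝ (n - 1 : ℕ) f I01 ∧
  ∃ g : ℝ → ℂ, MeasureTheory.IntegrableOn g I01 ∧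
    ∀ x ∈ I01, iteratedDerivWithin (n - 1) f I01 x
      = iteratedDerivWithin (n - 1) f I01 0 + ∫ t in (0:ℝ)..x, g t

/-- `Jdet a j k` is the minor `J_{(j+1)(k+1)} = a_{1,j} a_{2,k} - a_{1,k} a_{2,j}` of the
boundary coefficient matrix (`0`-based indices). -/
def Jdet (a : Fin 2 → Fin 4 → ℂ) (j k : Fin 4) : ℂ := a 0 j * a 1 k - a 0 k * a 1 j

/-- `y` satisfies the two-point boundary conditions `U_j(y) = 0`, `j = 1, 2`. -/
def SatisfiesBC (a : Fin 2 → Fin 4 → ℂ) (y : ℝ → ℂ × ℂ) : Prop :=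
  ∀ j : Fin 2, a j 0 * (y 0).1 + a j 1 * (y 0).2 + a j 2 * (y 1).1 + a j 3 * (y 1).2 = 0

/-- `y` is absolutely continuous on `[0,1]` (an indefinite integral of an integrable `g`,
which is then its a.e. derivative) and satisfies `-i B⁻¹ y' + Q y = rhs` a.e. on `[0,1]`. -/
def SolvesDirac (b₁ b₂ : ℝ) (Q12 Q21 : ℝ → ℂ) (y rhs : ℝ → ℂ × ℂ) : Prop :=
  ∃ g : ℝ → ℂ × ℂ, MeasureTheory.IntegrableOn g I01 ∧
    (∀ x ∈ I01, y x = y 0 + ∫ t in (0:ℝ)..x, g t) ∧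
    (∀ᵐ x ∂mu01,
      (-Complex.I) * (b₁ : ℂ)⁻¹ * (g x).1 + Q12 x * (y x).2 = (rhs x).1 ∧
      (-Complex.I) * (b₂ : ℂ)⁻¹ * (g x).2 + Q21 x * (y x).1 = (rhs x).2)

/-- `y` is a root function of the boundary value problem: a member of a chain
`ch 0, …, ch m` of absolutely continuous functions satisfying the boundary conditions,
with `ch 0 ≠ 0`, `L (ch 0) = λ • ch 0` a.e. and `L (ch j) = λ • ch j + ch (j-1)` a.e. -/
def IsRootFunction (b₁ b₂ : ℝ) (Q12 Q21 : ℝ → ℂ) (a : Fin 2 → Fin 4 → ℂ)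
    (y : ℝ → ℂ × ℂ) : Prop :=
  ∃ (lam : ℂ) (m : ℕ) (ch : ℕ → ℝ → ℂ × ℂ),
    (∀ j ≤ m, SatisfiesBC a (ch j)) ∧
    (∃ x ∈ I01, ch 0 x ≠ 0) ∧
    SolvesDirac b₁ b₂ Q12 Q21 (ch 0) (fun x => lam • ch 0 x) ∧
    (∀ j, 1 ≤ j → j ≤ m →
      SolvesDirac b₁ b₂ Q12 Q21 (ch j) (fun x => lam • ch j x + ch (j - 1) x)) ∧
    ∃ j ≤ m, y = ch j

/-- Completeness of the system of root functions in `L²([0,1]; ℂ²)`: the closed linear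
span of (the `L²`-classes of) all root functions is the whole space. -/
def RootSystemComplete (b₁ b₂ : ℝ) (Q12 Q21 : ℝ → ℂ) (a : Fin 2 → Fin 4 → ℂ) : Prop :=
  (Submodule.span ℂ {g : MeasureTheory.Lp (ℂ × ℂ) 2 mu01 |
    ∃ y : ℝ → ℂ × ℂ, IsRootFunction b₁ b₂ Q12 Q21 a y ∧
      (g : ℝ → ℂ × ℂ) =ᵐ[mu01] y}).topologicalClosure = ⊤

lemma uniqueDiffOn_I01 : UniqueDiffOn ℝ I01 := uniqueDiffOn_Icc zero_lt_one

lemma contDiffOn_nat_mono {f : ℝ → ℂ} {a b : ℕ} (h : ContDiffOn ℝ (b : ℕ) f I01)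
    (hab : a ≤ b) : ContDiffOn ℝ (a : ℕ) f I01 :=
  h.of_le (by exact_mod_cast hab)

lemma iteratedDerivWithin_sum' {ι : Type*} {u : Finset ι} {f : ι → ℝ → ℂ} {i : ℕ} {x : ℝ}
    (hx : x ∈ I01) (h : ∀ j ∈ u, ContDiffOn ℝ (i : ℕ) (f j) I01) :
    iteratedDerivWithin i (fun y => ∑ j ∈ u, f j y) I01 x
      = ∑ j ∈ u, iteratedDerivWithin i (f j) I01 x := by
  simp only [iteratedDerivWithin]
  rw [show (fun y => ∑ j ∈ u, f j y) = ∑ j ∈ u, f j by funext y; simp [Finset.sum_apply],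
    iteratedFDerivWithin_sum_apply uniqueDiffOn_I01 hx (fun j hj => h j hj x hx)]
  simp

/-- If all iterated derivatives of `g` up to order `r` vanish at `A`, so do those of `f * g`. -/
lemma van_mul {A : ℝ} (hA : A ∈ I01) :
    ∀ (r : ℕ) (f g : ℝ → ℂ), ContDiffOn ℝ (r : ℕ) f I01 → ContDiffOn ℝ (r : ℕ) g I01 →
    (∀ l ≤ r, iteratedDerivWithin l g I01 A = 0) →
    ∀ l ≤ r, iteratedDerivWithin l (fun x => f x * g x) I01 A = 0 := by
  intro r
  induction r with
  | zero =>
    intro f g hf hg hv l hl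
    interval_cases l
    have h0 := hv 0 le_rfl
    rw [iteratedDerivWithin_zero] at h0 ⊢
    simp [h0]
  | succ r IH =>
    intro f g hf hg hv l hl
    match l, hl with
    | 0, _ =>
      have h0 := hv 0 (by omega)
      rw [iteratedDerivWithin_zero] at h0 ⊢
      simp [h0]
    | (l' + 1), hl =>
      rw [iteratedDerivWithin_succ']
      have hfd : DifferentiableOn ℝ f I01 :=
        hf.differentiableOn (by simp)
      have hgd : DifferentiableOn ℝ g I01 :=
        hg.differentiableOn (by simp)
      have hEq : Set.EqOn (derivWithin (fun x => f x * g x) I01)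
          (fun x => derivWithin f I01 x * g x + f x * derivWithin g I01 x) I01 := by
        intro y hy
        exact derivWithin_mul (hfd y hy) (hgd y hy)
      rw [iteratedDerivWithin_congr hEq hA]
      have hf' : ContDiffOn ℝ (r : ℕ) (derivWithin f I01) I01 :=
        hf.derivWithin uniqueDiffOn_I01 (by exact_mod_cast le_rfl)
      have hg' : ContDiffOn ℝ (r : ℕ) (derivWithin g I01) I01 :=
        hg.derivWithin uniqueDiffOn_I01 (by exact_mod_cast le_rfl)
      have hfr : ContDiffOn ℝ (r : ℕ) f I01 := hf.of_le (by exact_mod_cast Nat.le_succ r)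
      have hgr : ContDiffOn ℝ (r : ℕ) g I01 := hg.of_le (by exact_mod_cast Nat.le_succ r)
      have e1 : (fun x => derivWithin f I01 x * g x + f x * derivWithin g I01 x)
          = (fun x => derivWithin f I01 x * g x) + (fun x => f x * derivWithin g I01 x) := rfl
      have hl' : l' ≤ r := by omega
      have hcd1 : ContDiffOn ℝ (l' : ℕ) (fun x => derivWithin f I01 x * g x) I01 :=
        contDiffOn_nat_mono (hf'.mul hgr) hl'
      have hcd2 : ContDiffOn ℝ (l' : ℕ) (fun x => f x * derivWithin g I01 x) I01 :=
        contDiffOn_nat_mono (hfr.mul hg') hl'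
      rw [e1, iteratedDerivWithin_add hA uniqueDiffOn_I01 (hcd1 A hA) (hcd2 A hA)]
      have z1 : iteratedDerivWithin l' (fun x => derivWithin f I01 x * g x) I01 A = 0 :=
        IH (derivWithin f I01) g hf' hgr (fun a ha => hv a (by omega)) l' hl'
      have z2 : iteratedDerivWithin l' (fun x => f x * derivWithin g I01 x) I01 A = 0 := by
        refine IH f (derivWithin g I01) hfr hg' (fun a ha => ?_) l' hl'
        rw [← iteratedDerivWithin_succ']
        exact hv (a + 1) (by omega)
      rw [z1, z2, add_zero]

/-- The key induction: smoothness of `σ k` on `[0,1]` and the value of its iterated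
derivatives at `A` in terms of iterated derivatives of `q`. -/
lemma key (q p : ℝ → ℂ) (n : ℕ)
    (hq : ContDiffOn ℝ ((n - 1 : ℕ) : ℕ) q I01) (hp : ContDiffOn ℝ ((n - 1 : ℕ) : ℕ) p I01)
    (σ : ℕ → ℝ → ℂ) (hσ1 : ∀ x ∈ I01, σ 1 x = q x)
    (hrec : ∀ k, 1 ≤ k → k + 1 ≤ n → ∀ x ∈ I01,
      σ (k + 1) x = -(derivWithin (σ k) I01 x)
        - p x * ∑ j ∈ Finset.Icc 1 (k - 1), σ j x * σ (k - j) x)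
    (A : ℝ) (hA : A ∈ I01) (m : ℕ) (hm : m < n)
    (hvan : ∀ j < m, iteratedDerivWithin j q I01 A = 0) :
    ∀ k, 1 ≤ k → k ≤ m + 1 →
      ContDiffOn ℝ ((n - k : ℕ) : ℕ) (σ k) I01 ∧
      ∀ i, i + k ≤ m + 1 → iteratedDerivWithin i (σ k) I01 A
        = (-1) ^ (k - 1) * iteratedDerivWithin (i + (k - 1)) q I01 A := by
  intro k
  induction k using Nat.strong_induction_on with
  | _ k IH =>
    intro hk1 hkm
    match k, hk1 with
    | 1, _ =>
      have hEq : Set.EqOn (σ 1) q I01 := fun x hx => hσ1 x hx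
      constructor
      · exact hq.congr hEq
      · intro i hi
        rw [iteratedDerivWithin_congr hEq hA]
        simp
    | (k' + 2), _ =>
      set K := k' + 1 with hK
      have hK1 : 1 ≤ K := by omega
      have hKm : K ≤ m := by omega
      have hKn : K + 1 ≤ n := by omega
      obtain ⟨hsm', hval'⟩ := IH K (by omega) hK1 (by omega)
      set S : ℝ → ℂ := fun x => ∑ j ∈ Finset.Icc 1 (K - 1), σ j x * σ (K - j) x with hS
      have hEq : Set.EqOn (σ (K + 1))
          (fun x => -(derivWithin (σ K) I01 x) - p x * S x) I01 :=
        fun x hx => hrec K hK1 hKn x hx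
      -- smoothness of the pieces
      have hder : ContDiffOn ℝ ((n - (K + 1) : ℕ) : ℕ) (derivWithin (σ K) I01) I01 := by
        refine hsm'.derivWithin uniqueDiffOn_I01 ?_
        exact_mod_cast (by omega : n - (K + 1) + 1 ≤ n - K)
      have hScd : ∀ r : ℕ, r ≤ n - (K + 1) → ContDiffOn ℝ (r : ℕ) S I01 := by
        intro r hr
        refine ContDiffOn.sum fun j hj => ?_
        rw [Finset.mem_Icc] at hj
        have h1 := (IH j (by omega) (by omega) (by omega)).1
        have h2 := (IH (K - j) (by omega) (by omega) (by omega)).1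
        exact (contDiffOn_nat_mono h1 (by omega)).mul (contDiffOn_nat_mono h2 (by omega))
      have hGcd : ∀ r : ℕ, r ≤ n - (K + 1) →
          ContDiffOn ℝ (r : ℕ) (fun x => -(derivWithin (σ K) I01 x) - p x * S x) I01 := by
        intro r hr
        exact ((contDiffOn_nat_mono hder hr).neg).sub
          ((contDiffOn_nat_mono hp (by omega)).mul (hScd r hr))
      constructor
      · exact (hGcd _ le_rfl).congr fun x hx => hEq hx
      · intro i hi
        have hiK : i ≤ m - K := by omega
        have hin : i ≤ n - (K + 1) := by omega
        rw [iteratedDerivWithin_congr hEq hA]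
        have e1 : (fun x => -(derivWithin (σ K) I01 x) - p x * S x)
            = (fun x => -(derivWithin (σ K) I01 x)) - (fun x => p x * S x) := rfl
        rw [e1, iteratedDerivWithin_sub hA uniqueDiffOn_I01
          ((contDiffOn_nat_mono hder hin).neg A hA)
          (((contDiffOn_nat_mono hp (by omega)).mul (hScd i hin)) A hA)]
        rw [iteratedDerivWithin_fun_neg]
        rw [← iteratedDerivWithin_succ']
        rw [hval' (i + 1) (by omega)]
        -- the product term vanishes
        have hvanS : ∀ l ≤ i, iteratedDerivWithin l S I01 A = 0 := by
          intro l hl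
          rw [hS, iteratedDerivWithin_sum' hA (fun j hj => ?_)]
          · refine Finset.sum_eq_zero fun j hj => ?_
            rw [Finset.mem_Icc] at hj
            have h1 := (IH j (by omega) (by omega) (by omega)).1
            obtain ⟨h2, h2v⟩ := IH (K - j) (by omega) (by omega) (by omega)
            refine van_mul hA l (σ j) (σ (K - j))
              (contDiffOn_nat_mono h1 (by omega)) (contDiffOn_nat_mono h2 (by omega))
              (fun a ha => ?_) l le_rfl
            rw [h2v a (by omega)]
            rw [hvan (a + (K - j - 1)) (by omega), mul_zero]
          · rw [Finset.mem_Icc] at hj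
            have h1 := (IH j (by omega) (by omega) (by omega)).1
            have h2 := (IH (K - j) (by omega) (by omega) (by omega)).1
            exact (contDiffOn_nat_mono h1 (by omega)).mul
              (contDiffOn_nat_mono h2 (by omega))
        have hz : iteratedDerivWithin i (fun x => p x * S x) I01 A = 0 :=
          van_mul hA i p S (contDiffOn_nat_mono hp (by omega)) (hScd i hin) hvanS i le_rfl
        rw [hz, sub_zero]
        have eidx : i + 1 + (K - 1) = i + (K + 1 - 1) := by omega
        have esgn : ((-1 : ℂ)) ^ (K + 1 - 1) = -(-1 : ℂ) ^ (K - 1) := by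
          have : K + 1 - 1 = (K - 1) + 1 := by omega
          rw [this, pow_succ]; ring
        rw [eidx, esgn]; ring

/-- Corollary: vanishing and non-vanishing of `σ_j^±(a)`. -/
theorem statement_12
    (b₁ b₂ : ℝ) (hb₁ : b₁ < 0) (hb₂ : 0 < b₂)
    (Q12 Q21 : ℝ → ℂ)
    (n : ℕ) (hn : 1 ≤ n)
    (hQ12 : MemW1 n Q12) (hQ21 : MemW1 n Q21)
    (qp qm : ℝ → ℂ)
    (hqp : qp = fun x => -Complex.I * (b₁ : ℂ) * Q12 x)
    (hqm : qm = fun x => -Complex.I * (b₂ : ℂ) * Q21 x)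
    (σp σm : ℕ → ℝ → ℂ)
    (hσp1 : ∀ x ∈ I01, σp 1 x = qm x)
    (hσm1 : ∀ x ∈ I01, σm 1 x = qp x)
    (hσpRec : ∀ k, 1 ≤ k → k + 1 ≤ n → ∀ x ∈ I01,
      σp (k + 1) x = -(derivWithin (σp k) I01 x)
        - qp x * ∑ j ∈ Finset.Icc 1 (k - 1), σp j x * σp (k - j) x)
    (hσmRec : ∀ k, 1 ≤ k → k + 1 ≤ n → ∀ x ∈ I01,
      σm (k + 1) x = -(derivWithin (σm k) I01 x)
        - qm x * ∑ j ∈ Finset.Icc 1 (k - 1), σm j x * σm (k - j) x)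
    (A : ℝ) (hA : A ∈ I01) (m : ℕ) (hm : m < n) :
    ((∀ j < m, iteratedDerivWithin j qm I01 A = 0) →
      iteratedDerivWithin m qm I01 A ≠ 0 →
      (∀ j, 1 ≤ j → j ≤ m → σp j A = 0) ∧ σp (m + 1) A ≠ 0) ∧
    ((∀ j < m, iteratedDerivWithin j qp I01 A = 0) →
      iteratedDerivWithin m qp I01 A ≠ 0 →
      (∀ j, 1 ≤ j → j ≤ m → σm j A = 0) ∧ σm (m + 1) A ≠ 0) := by
  subst hqp hqm
  have hqpcd : ContDiffOn ℝ ((n - 1 : ℕ) : ℕ) (fun x => -Complex.I * (b₁ : ℂ) * Q12 x) I01 :=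
    contDiffOn_const.mul hQ12.1
  have hqmcd : ContDiffOn ℝ ((n - 1 : ℕ) : ℕ) (fun x => -Complex.I * (b₂ : ℂ) * Q21 x) I01 :=
    contDiffOn_const.mul hQ21.1
  constructor
  · intro hv hnz
    have hk := key _ _ n hqmcd hqpcd σp hσp1 hσpRec A hA m hm hv
    constructor
    · intro j hj1 hjm
      have h := (hk j hj1 (by omega)).2 0 (by omega)
      rw [iteratedDerivWithin_zero] at h
      rw [h, hv (0 + (j - 1)) (by omega), mul_zero]
    · have h := (hk (m + 1) (by omega) le_rfl).2 0 (by omega)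
      rw [iteratedDerivWithin_zero] at h
      rw [h]
      have e : 0 + (m + 1 - 1) = m := by omega
      rw [e]
      exact mul_ne_zero (pow_ne_zero _ (by norm_num)) hnz
  · intro hv hnz
    have hk := key _ _ n hqpcd hqmcd σm hσm1 hσmRec A hA m hm hv
    constructor
    · intro j hj1 hjm
      have h := (hk j hj1 (by omega)).2 0 (by omega)
      rw [iteratedDerivWithin_zero] at h
      rw [h, hv (0 + (j - 1)) (by omega), mul_zero]
    · have h := (hk (m + 1) (by omega) le_rfl).2 0 (by omega)
      rw [iteratedDerivWithin_zero] at h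
      rw [h]
      have e : 0 + (m + 1 - 1) = m := by omega
      rw [e]
      exact mul_ne_zero (pow_ne_zero _ (by norm_num)) hnz
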